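/- If a central simple algebra A of degree n over F possesses a nonzero right ideal I of dimension n over F, then A is split: the right-multiplication map R: A → End(I*), determined by R(α)(f) = f ∘ (right multiplication by α), is an F-algebra isomorphism A ≅ End(I*) ≅ M_n(F). -/

import Mathlib

/-- If a central simple algebra `A` of degree `n` over `F` (`dim_F A = n²`) has a
nonzero right ideal `I` with `dim_F I = n`, then `A` is split: the
right-multiplication map `R : A → End(I*)`, `R(α)(f) = f ∘ (right mult. by α)`,
is an `F`-algebra isomorphism, and `A ≅ Mₙ(F)`. -/
theorem right_ideal_of_rank_n_splits
    (F : Type*) [Field F] (A : Type*) [Ring A] [Algebra F A]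
    [FiniteDimensional F A] [Algebra.IsCentral F A] [IsSimpleRing A]
    (n : ℕ) (hn : 0 < n) (hdim : Module.finrank F A = n ^ 2)
    (I : Submodule F A) (hI : ∀ x ∈ I, ∀ a : A, x * a ∈ I)
    (hIbot : I ≠ ⊥) (hIrank : Module.finrank F I = n) :
    (∃ e : A ≃ₐ[F] Module.End F (Module.Dual F I),
      ∀ (α : A) (f : Module.Dual F I) (x : I),
        e α f x = f ⟨(x : A) * α, hI x x.2 α⟩) ∧
    Nonempty (A ≃ₐ[F] Matrix (Fin n) (Fin n) F) := by
  classical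
  -- right multiplication on I
  let rI : A → (I →ₗ[F] I) := fun α =>
    { toFun := fun x => ⟨(x : A) * α, hI x x.2 α⟩
      map_add' := fun x y => by ext; simp [add_mul]
      map_smul' := fun c x => by ext; simp [smul_mul_assoc] }
  -- the algebra hom R : A →ₐ End(I*)
  let R : A →ₐ[F] Module.End F (Module.Dual F I) :=
  { toFun := fun α => (rI α).dualMap
    map_one' := by
      refine LinearMap.ext fun f => LinearMap.ext fun x => ?_
      simp only [LinearMap.dualMap_apply, Module.End.one_apply]
      congr 1
      ext
      simp [rI]
    map_mul' := fun α β => by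
      refine LinearMap.ext fun f => LinearMap.ext fun x => ?_
      simp only [LinearMap.dualMap_apply, Module.End.mul_apply]
      congr 1
      ext
      simp [rI, mul_assoc]
    map_zero' := by
      refine LinearMap.ext fun f => LinearMap.ext fun x => ?_
      simp only [LinearMap.dualMap_apply, LinearMap.zero_apply, rI, LinearMap.coe_mk,
        AddHom.coe_mk]
      have : (⟨(x : A) * 0, hI x x.2 0⟩ : I) = 0 := Subtype.ext (mul_zero _)
      rw [this, map_zero]
    map_add' := fun α β => by
      refine LinearMap.ext fun f => LinearMap.ext fun x => ?_
      simp only [LinearMap.dualMap_apply, LinearMap.add_apply, rI, LinearMap.coe_mk,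
        AddHom.coe_mk]
      have : (⟨(x : A) * (α + β), hI x x.2 _⟩ : I)
          = ⟨(x : A) * α, hI x x.2 _⟩ + ⟨(x : A) * β, hI x x.2 _⟩ :=
        Subtype.ext (mul_add _ _ _)
      rw [this, map_add]
    commutes' := fun c => by
      refine LinearMap.ext fun f => LinearMap.ext fun x => ?_
      simp only [LinearMap.dualMap_apply, rI, LinearMap.coe_mk, AddHom.coe_mk]
      have : (⟨(x : A) * algebraMap F A c, hI x x.2 _⟩ : I) = c • x := by
        refine Subtype.ext ?_
        simp [Algebra.algebraMap_eq_smul_one, mul_smul_comm]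
      rw [this, map_smul]
      rfl }
  -- dimensions
  have hIfin : FiniteDimensional F I := inferInstance
  have hdualrank : Module.finrank F (Module.Dual F I) = n := by
    rw [Subspace.dual_finrank_eq, hIrank]
  have hntD : Nontrivial (Module.Dual F I) :=
    Module.nontrivial_of_finrank_pos (R := F) (by rw [hdualrank]; exact hn)
  have hntE : Nontrivial (Module.End F (Module.Dual F I)) := by
    refine ⟨0, 1, fun h => ?_⟩
    obtain ⟨f, hf⟩ := exists_ne (0 : Module.Dual F I)
    exact hf (by simpa using congrFun (congrArg DFunLike.coe h.symm) f)
  have hinj : Function.Injective R := R.toRingHom.injective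
  have hrankE : Module.finrank F (Module.End F (Module.Dual F I)) = n ^ 2 := by
    rw [Module.finrank_linearMap, hdualrank, sq]
  have hbij : Function.Bijective R := by
    refine ⟨hinj, ?_⟩
    have := (LinearMap.injective_iff_surjective_of_finrank_eq_finrank
      (V₂ := Module.End F (Module.Dual F I)) (f := R.toLinearMap) (hdim.trans hrankE.symm)).mp hinj
    exact this
  let e : A ≃ₐ[F] Module.End F (Module.Dual F I) := AlgEquiv.ofBijective R hbij
  refine ⟨⟨e, fun α f x => rfl⟩, ?_⟩
  -- matrix part
  have hb : Module.finrank F (Module.Dual F I) = n := hdualrank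
  let b := Module.finBasisOfFinrankEq F (Module.Dual F I) hb
  exact ⟨e.trans (algEquivMatrix b)⟩
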